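/- Let P be a finite collection of cells. The set of inner 2-minors of P forms a reduced quadratic Gröbner basis of I_P with respect to the lexicographic order induced by x_{(i,j)} > x_{(k,l)} iff i > k, or i = k and j > l, if and only if for any two inner intervals [a,b] and [b,c] of P (with b the upper right corner of the first and lower left corner of the second), at least one of the intervals [e,c] or [d,c] is an inner interval of P, where d and e are the anti-diagonal corners of [a,b]. -/

import Mathlib

open scoped BigOperators

abbrev Cell : Type := ℕ × ℕ

/-- The four corners of the unit cell with lower left corner `a`. -/
def cellVerts (a : Cell) : Finset (ℕ × ℕ) :=
  {a, (a.1 + 1, a.2), (a.1, a.2 + 1), (a.1 + 1, a.2 + 1)}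

/-- The vertex set of a collection of cells. -/
def verts (P : Finset Cell) : Finset (ℕ × ℕ) := P.biUnion cellVerts

/-- Row convexity of a collection of cells. -/
def RowConvex (P : Finset Cell) : Prop :=
  ∀ a ∈ P, ∀ b ∈ P, a.2 = b.2 → ∀ r : ℕ, a.1 ≤ r → r ≤ b.1 → (r, a.2) ∈ P

/-- Column convexity of a collection of cells. -/
def ColConvex (P : Finset Cell) : Prop :=
  ∀ a ∈ P, ∀ b ∈ P, a.1 = b.1 → ∀ s : ℕ, a.2 ≤ s → s ≤ b.2 → (a.1, s) ∈ P

/-- A collection of cells is convex if it is row and column convex. -/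
def IsConvexColl (P : Finset Cell) : Prop := RowConvex P ∧ ColConvex P

/-- Weak connectedness: any two cells are joined by a sequence of cells of `P`
in which consecutive cells share at least one vertex. -/
def WeaklyConnected (P : Finset Cell) : Prop :=
  ∀ a ∈ P, ∀ b ∈ P,
    Relation.ReflTransGen
      (fun c d => c ∈ P ∧ d ∈ P ∧ (cellVerts c ∩ cellVerts d).Nonempty) a b

/-- Two cells share an edge. -/
def edgeAdj (a b : Cell) : Prop :=
  (a.1 = b.1 ∧ (a.2 + 1 = b.2 ∨ b.2 + 1 = a.2)) ∨
  (a.2 = b.2 ∧ (a.1 + 1 = b.1 ∨ b.1 + 1 = a.1))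

/-- Connectedness: any two cells are joined by an edge-sharing path of cells of `P`. -/
def ConnectedColl (P : Finset Cell) : Prop :=
  ∀ a ∈ P, ∀ b ∈ P,
    Relation.ReflTransGen (fun c d => c ∈ P ∧ d ∈ P ∧ edgeAdj c d) a b

/-- `Q` is a connected component of `P`. -/
def IsComponent (P Q : Finset Cell) : Prop :=
  Q ⊆ P ∧ Q.Nonempty ∧ ConnectedColl Q ∧
    ∀ R : Finset Cell, Q ⊆ R → R ⊆ P → ConnectedColl R → R = Q

/-- The cell `c` belongs to the interval `[a,b]`. -/
def cellInBox (a b : ℕ × ℕ) (c : Cell) : Prop :=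
  a.1 ≤ c.1 ∧ c.1 + 1 ≤ b.1 ∧ a.2 ≤ c.2 ∧ c.2 + 1 ≤ b.2

/-- `c` is a border cell of the interval `[a,b]`. -/
def borderCell (a b : ℕ × ℕ) (c : Cell) : Prop :=
  cellInBox a b c ∧ (c.1 = a.1 ∨ c.1 + 1 = b.1 ∨ c.2 = a.2 ∨ c.2 + 1 = b.2)

/-- A collection of cells is simple (has no holes). -/
def SimpleColl (P : Finset Cell) : Prop :=
  ∀ a b : ℕ × ℕ, a.1 < b.1 → a.2 < b.2 →
    (∀ v ∈ verts P, a.1 < v.1 ∧ v.1 < b.1 ∧ a.2 < v.2 ∧ v.2 < b.2) →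
    ∀ c : Cell, cellInBox a b c → c ∉ P →
      ∃ d : Cell, borderCell a b d ∧
        Relation.ReflTransGen
          (fun u v => cellInBox a b u ∧ cellInBox a b v ∧ u ∉ P ∧ v ∉ P ∧ edgeAdj u v) c d

/-- `[a,b]` is an inner interval of `P`: it is proper and all of its cells belong to `P`. -/
def InnerInterval (P : Finset Cell) (a b : ℕ × ℕ) : Prop :=
  a.1 < b.1 ∧ a.2 < b.2 ∧
    ∀ r s : ℕ, a.1 ≤ r → r < b.1 → a.2 ≤ s → s < b.2 → (r, s) ∈ P

/-- The set of inner 2-minors of `P`. -/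
def innerMinors (K : Type*) [Field K] (P : Finset Cell) :
    Set (MvPolynomial {v : ℕ × ℕ // v ∈ verts P} K) :=
  { f | ∃ a b c d : {v : ℕ × ℕ // v ∈ verts P},
      InnerInterval P a.1 b.1 ∧ c.1 = (b.1.1, a.1.2) ∧ d.1 = (a.1.1, b.1.2) ∧
      f = MvPolynomial.X a * MvPolynomial.X b - MvPolynomial.X c * MvPolynomial.X d }

/-- The ideal of inner 2-minors of `P`. -/
noncomputable def innerIdeal (K : Type*) [Field K] (P : Finset Cell) :
    Ideal (MvPolynomial {v : ℕ × ℕ // v ∈ verts P} K) :=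
  Ideal.span (innerMinors K P)

/-- The variable order for the lexicographic order `<¹_lex`:
`x_{(i,j)} > x_{(k,l)}` iff `i > k`, or `i = k` and `j > l`. -/
def varGt (a b : ℕ × ℕ) : Prop := b.1 < a.1 ∨ (a.1 = b.1 ∧ b.2 < a.2)

/-- The induced lexicographic order on monomials (exponent vectors): `m < m'` iff at the
greatest variable where they differ, `m` has the smaller exponent. -/
def monLt {P : Finset Cell} (m m' : {v : ℕ × ℕ // v ∈ verts P} →₀ ℕ) : Prop :=
  ∃ a : {v : ℕ × ℕ // v ∈ verts P},
    m a < m' a ∧ ∀ b : {v : ℕ × ℕ // v ∈ verts P}, varGt b.1 a.1 → m b = m' b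

/-- `m` is the leading monomial of `f` with respect to `<¹_lex`. -/
def IsLeadMon {K : Type*} [Field K] {P : Finset Cell}
    (f : MvPolynomial {v : ℕ × ℕ // v ∈ verts P} K)
    (m : {v : ℕ × ℕ // v ∈ verts P} →₀ ℕ) : Prop :=
  m ∈ f.support ∧ ∀ m' ∈ f.support, m' ≠ m → monLt m' m

/-- `G` is a Gröbner basis of the ideal `I` with respect to `<¹_lex`. -/
def IsGroebnerBasis {K : Type*} [Field K] {P : Finset Cell}
    (G : Set (MvPolynomial {v : ℕ × ℕ // v ∈ verts P} K))
    (I : Ideal (MvPolynomial {v : ℕ × ℕ // v ∈ verts P} K)) : Prop :=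
  (∀ g ∈ G, g ∈ I) ∧
  ∀ f ∈ I, f ≠ 0 → ∃ g ∈ G, ∃ mg mf, IsLeadMon g mg ∧ IsLeadMon f mf ∧
    ∃ d, mf = mg + d

/-- `G` is a reduced Gröbner basis of `I` with respect to `<¹_lex`: it is a Gröbner
basis, each element is monic, and no monomial occurring in an element of `G` is
divisible by the leading monomial of another element of `G`. -/
def IsReducedGroebnerBasis {K : Type*} [Field K] {P : Finset Cell}
    (G : Set (MvPolynomial {v : ℕ × ℕ // v ∈ verts P} K))
    (I : Ideal (MvPolynomial {v : ℕ × ℕ // v ∈ verts P} K)) : Prop :=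
  IsGroebnerBasis G I ∧
  (∀ g ∈ G, ∃ m, IsLeadMon g m ∧ g.coeff m = 1) ∧
  (∀ g ∈ G, ∀ g' ∈ G, g' ≠ g → ∀ m ∈ g.support, ∀ m',
      IsLeadMon g' m' → ¬ ∃ d, m = m' + d)
namespace PolyoAux
open MvPolynomial Finsupp

variable {P : Finset Cell}

abbrev σP (P : Finset Cell) := {v : ℕ × ℕ // v ∈ verts P}
abbrev Mon (P : Finset Cell) := σP P →₀ ℕ

/-- Every lattice point of an inner interval is a vertex of `P`. -/
lemma mem_verts_of_box {a b : ℕ × ℕ} (h : InnerInterval P a b) {x y : ℕ}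
    (hx1 : a.1 ≤ x) (hx2 : x ≤ b.1) (hy1 : a.2 ≤ y) (hy2 : y ≤ b.2) :
    (x, y) ∈ verts P := by
  obtain ⟨h1, h2, h3⟩ := h
  obtain ⟨r, hr1, hr2, hr3⟩ : ∃ r, a.1 ≤ r ∧ r < b.1 ∧ (x = r ∨ x = r + 1) := by
    rcases Nat.lt_or_ge x b.1 with h' | h'
    · exact ⟨x, hx1, h', Or.inl rfl⟩
    · exact ⟨b.1 - 1, by omega, by omega, by omega⟩
  obtain ⟨s, hs1, hs2, hs3⟩ : ∃ s, a.2 ≤ s ∧ s < b.2 ∧ (y = s ∨ y = s + 1) := by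
    rcases Nat.lt_or_ge y b.2 with h' | h'
    · exact ⟨y, hy1, h', Or.inl rfl⟩
    · exact ⟨b.2 - 1, by omega, by omega, by omega⟩
  have hcell : ((r, s) : Cell) ∈ P := h3 r s hr1 hr2 hs1 hs2
  refine Finset.mem_biUnion.2 ⟨(r, s), hcell, ?_⟩
  simp only [cellVerts, Finset.mem_insert, Finset.mem_singleton, Prod.ext_iff]
  rcases hr3 with rfl | rfl <;> rcases hs3 with rfl | rfl <;> simp

lemma vA {a b : ℕ × ℕ} (h : InnerInterval P a b) : a ∈ verts P := by
  have := mem_verts_of_box h (le_refl a.1) (le_of_lt h.1) (le_refl a.2) (le_of_lt h.2.1)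
  simpa using this

lemma vB {a b : ℕ × ℕ} (h : InnerInterval P a b) : b ∈ verts P := by
  have := mem_verts_of_box h (le_of_lt h.1) (le_refl b.1) (le_of_lt h.2.1) (le_refl b.2)
  simpa using this

lemma vC {a b : ℕ × ℕ} (h : InnerInterval P a b) : (b.1, a.2) ∈ verts P :=
  mem_verts_of_box h (le_of_lt h.1) (le_refl b.1) (le_refl a.2) (le_of_lt h.2.1)

lemma vD {a b : ℕ × ℕ} (h : InnerInterval P a b) : (a.1, b.2) ∈ verts P :=
  mem_verts_of_box h (le_refl a.1) (le_of_lt h.1) (le_of_lt h.2.1) (le_refl b.2)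

/-- Monotonicity: a proper subinterval of an inner interval is inner. -/
lemma inner_mono {a b x y : ℕ × ℕ} (h : InnerInterval P a b)
    (h1 : a.1 ≤ x.1) (h2 : a.2 ≤ x.2) (h3 : y.1 ≤ b.1) (h4 : y.2 ≤ b.2)
    (h5 : x.1 < y.1) (h6 : x.2 < y.2) : InnerInterval P x y :=
  ⟨h5, h6, fun r s hr1 hr2 hs1 hs2 => h.2.2 r s (by omega) (by omega) (by omega) (by omega)⟩

/-- One reduction step on monomials: replace the diagonal pair of an inner interval
by its anti-diagonal pair. -/
def Step (P : Finset Cell) (m m' : Mon P) : Prop :=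
  ∃ (u : Mon P) (a b c d : σP P), InnerInterval P a.1 b.1 ∧
    c.1 = (b.1.1, a.1.2) ∧ d.1 = (a.1.1, b.1.2) ∧
    m = u + Finsupp.single a 1 + Finsupp.single b 1 ∧
    m' = u + Finsupp.single c 1 + Finsupp.single d 1

lemma step_mk (u : Mon P) {a b : ℕ × ℕ} (h : InnerInterval P a b) :
    Step P (u + Finsupp.single ⟨a, vA h⟩ 1 + Finsupp.single ⟨b, vB h⟩ 1)
      (u + Finsupp.single ⟨(b.1, a.2), vC h⟩ 1 + Finsupp.single ⟨(a.1, b.2), vD h⟩ 1) :=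
  ⟨u, ⟨a, vA h⟩, ⟨b, vB h⟩, ⟨(b.1, a.2), vC h⟩, ⟨(a.1, b.2), vD h⟩, h, rfl, rfl, rfl, rfl⟩

lemma varGt_trans {x y z : ℕ × ℕ} (h1 : varGt x y) (h2 : varGt y z) : varGt x z := by
  unfold varGt at *; omega

lemma varGt_asymm {x y : ℕ × ℕ} (h1 : varGt x y) (h2 : varGt y x) : False := by
  unfold varGt at *; omega

lemma varGt_irrefl (x : ℕ × ℕ) : ¬ varGt x x := by unfold varGt; omega

lemma varGt_trichot (x y : ℕ × ℕ) : x = y ∨ varGt x y ∨ varGt y x := by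
  unfold varGt
  rcases x with ⟨x1, x2⟩; rcases y with ⟨y1, y2⟩
  simp only [Prod.mk.injEq]
  omega

end PolyoAux
namespace PolyoAux
variable {P : Finset Cell}

lemma exists_greatest {α : Type*} (lt : α → α → Prop)
    (htr : ∀ x y z, lt x y → lt y z → lt x z)
    (htri : ∀ x y : α, x = y ∨ lt x y ∨ lt y x)
    (s : Finset α) : s.Nonempty → ∃ m ∈ s, ∀ x ∈ s, x ≠ m → lt x m := by
  classical
  induction s using Finset.induction_on with
  | empty => intro hs; exact absurd hs (by simp)
  | @insert aa tt hat ih =>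
    intro _
    rcases tt.eq_empty_or_nonempty with rfl | ht
    · exact ⟨aa, by simp, by intro x hx hne; simp at hx; exact absurd hx hne⟩
    · obtain ⟨m, hm, hmax⟩ := ih ht
      rcases htri aa m with heq | h | h
      · refine ⟨m, Finset.mem_insert_of_mem hm, ?_⟩
        intro x hx hne
        rcases Finset.mem_insert.1 hx with rfl | hx'
        · exact absurd heq hne
        · exact hmax x hx' hne
      · refine ⟨m, Finset.mem_insert_of_mem hm, ?_⟩
        intro x hx hne
        rcases Finset.mem_insert.1 hx with rfl | hx'
        · exact h
        · exact hmax x hx' hne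
      · refine ⟨aa, Finset.mem_insert_self _ _, ?_⟩
        intro x hx hne
        rcases Finset.mem_insert.1 hx with rfl | hx'
        · exact absurd rfl hne
        · by_cases hxm : x = m
          · exact hxm ▸ h
          · exact htr x m aa (hmax x hx' hxm) h

lemma monLt_trans {m₁ m₂ m₃ : Mon P} (h1 : monLt m₁ m₂) (h2 : monLt m₂ m₃) :
    monLt m₁ m₃ := by
  obtain ⟨a1, ha1, ha1'⟩ := h1
  obtain ⟨a2, ha2, ha2'⟩ := h2
  rcases varGt_trichot a1.1 a2.1 with he | h | h
  · have : a1 = a2 := Subtype.ext he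
    subst this
    exact ⟨a1, lt_trans ha1 ha2, fun b hb => (ha1' b hb).trans (ha2' b hb)⟩
  · -- varGt a1 a2 : witness a1, since above a1 everything equal, and at a1 : m2 a1 = m3 a1
    refine ⟨a1, ?_, fun b hb => (ha1' b hb).trans (ha2' b (varGt_trans hb h))⟩
    have := ha2' a1 h
    omega
  · -- varGt a2 a1 : witness a2
    refine ⟨a2, ?_, fun b hb => (ha1' b (varGt_trans hb h)).trans (ha2' b hb)⟩
    have := ha1' a2 h
    omega

lemma monLt_asymm {m₁ m₂ : Mon P} (h1 : monLt m₁ m₂) (h2 : monLt m₂ m₁) : False := by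
  obtain ⟨a1, ha1, ha1'⟩ := h1
  obtain ⟨a2, ha2, ha2'⟩ := h2
  rcases varGt_trichot a1.1 a2.1 with he | h | h
  · have : a1 = a2 := Subtype.ext he
    subst this; omega
  · have := ha2' a1 h; omega
  · have := ha1' a2 h; omega

lemma monLt_irrefl (m : Mon P) : ¬ monLt m m := fun h => monLt_asymm h h

lemma monLt_trichot {m m' : Mon P} (h : m ≠ m') : monLt m m' ∨ monLt m' m := by
  classical
  set D := (m.support ∪ m'.support).filter (fun v => m v ≠ m' v) with hD
  have hmemD : ∀ v, m v ≠ m' v → v ∈ D := by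
    intro v hv
    refine Finset.mem_filter.2 ⟨?_, hv⟩
    rcases eq_or_ne (m v) 0 with h0 | h0
    · exact Finset.mem_union_right _ (Finsupp.mem_support_iff.2 (by omega))
    · exact Finset.mem_union_left _ (Finsupp.mem_support_iff.2 h0)
  have hne : D.Nonempty := by
    by_contra hemp
    apply h
    ext v
    by_contra hv
    exact hemp ⟨v, hmemD v hv⟩
  obtain ⟨a, haD, hamax⟩ := exists_greatest (fun x y : σP P => varGt y.1 x.1)
    (fun x y z h1 h2 => varGt_trans h2 h1)
    (fun x y => by
      rcases varGt_trichot x.1 y.1 with he | h' | h'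
      · exact Or.inl (Subtype.ext he)
      · exact Or.inr (Or.inr h')
      · exact Or.inr (Or.inl h')) D hne
  have haup : ∀ b : σP P, varGt b.1 a.1 → m b = m' b := by
    intro b hb
    by_contra hbne
    have hbD := hmemD b hbne
    rcases eq_or_ne b a with rfl | hba
    · exact varGt_irrefl _ hb
    · exact varGt_asymm hb (hamax b hbD hba)
  have hav : m a ≠ m' a := (Finset.mem_filter.1 haD).2
  rcases Nat.lt_or_ge (m a) (m' a) with h' | h'
  · exact Or.inl ⟨a, h', haup⟩
  · exact Or.inr ⟨a, by omega, fun b hb => (haup b hb).symm⟩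

lemma monLt_wf : WellFounded (fun m m' : Mon P => monLt m m') := by
  classical
  have hwf : WellFounded (Finsupp.Lex (fun x y : σP P => varGt x.1 y.1) ((· < ·) : ℕ → ℕ → Prop)) := by
    refine Finsupp.Lex.wellFounded (fun n h => by omega) (Nat.lt_wfRel.wf) ?_
    have hsub : ∀ x y : σP P, ((fun x y : σP P => varGt x.1 y.1)ᶜ ⊓ (· ≠ ·)) x y →
        varGt y.1 x.1 := by
      intro x y hxy
      obtain ⟨h1, h2⟩ := hxy
      rcases varGt_trichot x.1 y.1 with he | h' | h'
      · exact absurd (Subtype.ext he) h2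
      · exact absurd h' h1
      · exact h'
    have : WellFounded (fun x y : σP P => varGt y.1 x.1) := by
      haveI : IsTrans (σP P) (fun x y : σP P => varGt y.1 x.1) :=
        ⟨fun x y z h1 h2 => varGt_trans h2 h1⟩
      haveI : IsIrrefl (σP P) (fun x y : σP P => varGt y.1 x.1) :=
        ⟨fun x => varGt_irrefl x.1⟩
      exact Finite.wellFounded_of_trans_of_irrefl _
    exact Subrelation.wf (fun {x y} h => hsub x y h) this
  refine Subrelation.wf ?_ hwf
  rintro m m' ⟨a, h1, h2⟩
  exact ⟨a, h2, h1⟩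

end PolyoAux
namespace PolyoAux
attribute [local instance] Classical.propDecidable
variable {P : Finset Cell}

lemma step_monLt {m m' : Mon P} (h : Step P m m') : monLt m' m := by
  classical
  obtain ⟨u, a, b, c, d, hin, hc, hd, rfl, rfl⟩ := h
  have h1 : a.1.1 < b.1.1 := hin.1
  have h2 : a.1.2 < b.1.2 := hin.2.1
  have hgtA : varGt b.1 a.1 := Or.inl h1
  have hgtC : varGt b.1 c.1 := by rw [hc]; exact Or.inr ⟨rfl, h2⟩
  have hgtD : varGt b.1 d.1 := by rw [hd]; exact Or.inl h1
  refine ⟨b, ?_, ?_⟩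
  · have hab : (Finsupp.single a (1:ℕ)) b = 0 := by
      rw [Finsupp.single_apply, if_neg]
      intro he; exact varGt_irrefl b.1 (he ▸ hgtA)
    have hcb : (Finsupp.single c (1:ℕ)) b = 0 := by
      rw [Finsupp.single_apply, if_neg]
      intro he; exact varGt_irrefl b.1 (he ▸ hgtC)
    have hdb : (Finsupp.single d (1:ℕ)) b = 0 := by
      rw [Finsupp.single_apply, if_neg]
      intro he; exact varGt_irrefl b.1 (he ▸ hgtD)
    simp [Finsupp.add_apply, hab, hcb, hdb, Finsupp.single_eq_same]
  · intro v hv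
    have hxv : ∀ x : σP P, varGt b.1 x.1 → (Finsupp.single x (1:ℕ)) v = 0 := by
      intro x hx
      rw [Finsupp.single_apply, if_neg]
      intro he; exact varGt_asymm hv (he ▸ hx)
    have hbv : (Finsupp.single b (1:ℕ)) v = 0 := by
      rw [Finsupp.single_apply, if_neg]
      rintro rfl; exact varGt_irrefl _ hv
    simp [Finsupp.add_apply, hxv a hgtA, hxv c hgtC, hxv d hgtD, hbv]

/-- Reflexive transitive closure of the reduction. -/
def Star (P : Finset Cell) : Mon P → Mon P → Prop := Relation.ReflTransGen (Step P)

lemma star_le {m m' : Mon P} (h : Star P m m') : m' = m ∨ monLt m' m := by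
  induction h with
  | refl => exact Or.inl rfl
  | tail h1 h2 ih =>
    have hlt := step_monLt h2
    rcases ih with rfl | ih'
    · exact Or.inr hlt
    · exact Or.inr (monLt_trans hlt ih')

lemma wf_rev : WellFounded (fun x y : Mon P => Step P y x) :=
  Subrelation.wf (fun {x y} h => step_monLt h) monLt_wf

/-- Local confluence of the reduction. -/
def LocConf (P : Finset Cell) : Prop :=
  ∀ m p q : Mon P, Step P m p → Step P m q → ∃ r, Star P p r ∧ Star P q r

theorem confluent (hl : LocConf P) (m p q : Mon P) (hp : Star P m p) (hq : Star P m q) :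
    ∃ r, Star P p r ∧ Star P q r := by
  revert p q hp hq
  refine (wf_rev (P := P)).induction
    (C := fun m => ∀ p q : Mon P, Star P m p → Star P m q → ∃ r, Star P p r ∧ Star P q r) m ?_
  intro x IH p q hp hq
  rcases Relation.ReflTransGen.cases_head hp with rfl | ⟨p1, hxp1, hp1p⟩
  · exact ⟨q, hq, Relation.ReflTransGen.refl⟩
  rcases Relation.ReflTransGen.cases_head hq with rfl | ⟨q1, hxq1, hq1q⟩
  · exact ⟨p, Relation.ReflTransGen.refl, hp⟩
  obtain ⟨t, hp1t, hq1t⟩ := hl x p1 q1 hxp1 hxq1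
  obtain ⟨s, hps, hts⟩ := IH p1 hxp1 p t hp1p hp1t
  obtain ⟨r, hqr, hsr⟩ := IH q1 hxq1 q s hq1q (Relation.ReflTransGen.trans hq1t hts)
  exact ⟨r, Relation.ReflTransGen.trans hps hsr, hqr⟩

/-- The normal form of a monomial under the reduction. -/
noncomputable def nf (P : Finset Cell) : Mon P → Mon P :=
  (wf_rev (P := P)).fix (fun m rec =>
    if h : ∃ m', Step P m m' then rec h.choose h.choose_spec else m)

lemma nf_eq (m : Mon P) :
    nf P m = if h : ∃ m', Step P m m' then nf P h.choose else m :=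
  WellFounded.fix_eq _ _ m

lemma nf_star (m : Mon P) : Star P m (nf P m) := by
  refine (wf_rev (P := P)).induction (C := fun m => Star P m (nf P m)) m ?_
  intro x IH
  rw [nf_eq]
  by_cases h : ∃ m', Step P x m'
  · rw [dif_pos h]
    exact Relation.ReflTransGen.head h.choose_spec (IH _ h.choose_spec)
  · rw [dif_neg h]
    exact Relation.ReflTransGen.refl

lemma nf_irred (m : Mon P) : ¬ ∃ m', Step P (nf P m) m' := by
  refine (wf_rev (P := P)).induction (C := fun m => ¬ ∃ m', Step P (nf P m) m') m ?_
  intro x IH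
  rw [nf_eq]
  by_cases h : ∃ m', Step P x m'
  · rw [dif_pos h]
    exact IH _ h.choose_spec
  · rw [dif_neg h]
    exact h

lemma star_irred {x r : Mon P} (hir : ¬ ∃ y, Step P x y) (h : Star P x r) : r = x := by
  rcases Relation.ReflTransGen.cases_head h with rfl | ⟨y, hy, _⟩
  · rfl
  · exact absurd ⟨y, hy⟩ hir

lemma nf_step (hl : LocConf P) {m m' : Mon P} (h : Step P m m') : nf P m = nf P m' := by
  obtain ⟨r, h1, h2⟩ := confluent hl m (nf P m) (nf P m') (nf_star m)
    (Relation.ReflTransGen.head h (nf_star m'))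
  rw [← star_irred (nf_irred m) h1, ← star_irred (nf_irred m') h2]

lemma nf_le (m : Mon P) : nf P m = m ∨ monLt (nf P m) m := star_le (nf_star m)

end PolyoAux
namespace PolyoAux
attribute [local instance] Classical.propDecidable
variable {P : Finset Cell}

/-- Shorthand for a single-variable monomial. -/
noncomputable abbrev sE (v : ℕ × ℕ) (h : v ∈ verts P) : Mon P := Finsupp.single (⟨v, h⟩ : σP P) 1

lemma step_of {a b : ℕ × ℕ} (h : InnerInterval P a b) (u : Mon P) {p q : Mon P}
    (hp : p = u + sE a (vA h) + sE b (vB h))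
    (hq : q = u + sE (b.1, a.2) (vC h) + sE (a.1, b.2) (vD h)) : Step P p q := by
  subst hp hq
  exact ⟨u, ⟨a, vA h⟩, ⟨b, vB h⟩, ⟨(b.1, a.2), vC h⟩, ⟨(a.1, b.2), vD h⟩, h, rfl, rfl, rfl, rfl⟩

lemma star_eq {p p' r : Mon P} (h : p = p') (hs : Star P p' r) : Star P p r := h ▸ hs

lemma inner_of {x1 x2 y1 y2 : ℕ} (h1 : x1 < y1) (h2 : x2 < y2)
    (h3 : ∀ r s : ℕ, x1 ≤ r → r < y1 → x2 ≤ s → s < y2 → ((r, s) : Cell) ∈ P) :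
    InnerInterval P (x1, x2) (y1, y2) := ⟨h1, h2, h3⟩

lemma inner_cells {a b : ℕ × ℕ} (h : InnerInterval P a b) :
    ∀ r s : ℕ, a.1 ≤ r → r < b.1 → a.2 ≤ s → s < b.2 → ((r, s) : Cell) ∈ P := h.2.2

lemma addc {x y s : Mon P} (h : x + s = y + s) : x = y := by
  ext v
  have := DFunLike.congr_fun h v
  simp only [Finsupp.add_apply] at this
  omega

lemma sub_single {u : Mon P} {x : σP P} (h : 1 ≤ u x) :
    ∃ w, u = w + Finsupp.single x 1 := by
  have hle : Finsupp.single x 1 ≤ u := Finsupp.single_le_iff.2 h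
  obtain ⟨w, hw⟩ := exists_add_of_le hle
  exact ⟨w, by rw [hw, add_comm]⟩

lemma peel1 {u1 u2 : Mon P} {x y : σP P}
    (h : u1 + Finsupp.single x 1 = u2 + Finsupp.single y 1) (hne : y ≠ x) :
    ∃ w, u1 = w + Finsupp.single y 1 ∧ u2 = w + Finsupp.single x 1 := by
  have hxy : x ≠ y := fun he => hne he.symm
  have hy : 1 ≤ u1 y := by
    have := DFunLike.congr_fun h y
    simp only [Finsupp.add_apply, Finsupp.single_eq_same, Finsupp.single_eq_of_ne' hxy] at this
    omega
  obtain ⟨w, hw⟩ := sub_single hy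
  refine ⟨w, hw, ?_⟩
  rw [hw] at h
  have h' : (w + Finsupp.single x 1) + Finsupp.single y 1
      = u2 + Finsupp.single y 1 := by
    calc (w + Finsupp.single x 1) + Finsupp.single y 1
        = (w + Finsupp.single y 1) + Finsupp.single x 1 := by abel
      _ = u2 + Finsupp.single y 1 := h
  exact (addc h').symm

lemma peel2 {u1 u2 : Mon P} {x y x' y' : σP P}
    (h : u1 + Finsupp.single x 1 + Finsupp.single y 1
       = u2 + Finsupp.single x' 1 + Finsupp.single y' 1)
    (h1 : x' ≠ x) (h2 : x' ≠ y) (h3 : y' ≠ x) (h4 : y' ≠ y) (h5 : x' ≠ y') :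
    ∃ w, u1 = w + Finsupp.single x' 1 + Finsupp.single y' 1 ∧
         u2 = w + Finsupp.single x 1 + Finsupp.single y 1 := by
  have hx' : 1 ≤ u1 x' := by
    have := DFunLike.congr_fun h x'
    simp only [Finsupp.add_apply, Finsupp.single_eq_same, Finsupp.single_eq_of_ne' h1.symm,
      Finsupp.single_eq_of_ne' h2.symm, Finsupp.single_eq_of_ne' h5] at this
    omega
  obtain ⟨w1, hw1⟩ := sub_single hx'
  have hy' : 1 ≤ w1 y' := by
    have := DFunLike.congr_fun h y'
    rw [hw1] at this
    simp only [Finsupp.add_apply, Finsupp.single_eq_same, Finsupp.single_eq_of_ne' h3.symm,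
      Finsupp.single_eq_of_ne' h4.symm, Finsupp.single_eq_of_ne' h5.symm] at this
    omega
  obtain ⟨w, hw⟩ := sub_single hy'
  have hu1 : u1 = w + Finsupp.single x' 1 + Finsupp.single y' 1 := by
    rw [hw1, hw]; abel
  refine ⟨w, hu1, ?_⟩
  rw [hu1] at h
  have h' : (w + Finsupp.single x 1 + Finsupp.single y 1)
        + (Finsupp.single x' 1 + Finsupp.single y' 1)
      = u2 + (Finsupp.single x' 1 + Finsupp.single y' 1) := by
    calc (w + Finsupp.single x 1 + Finsupp.single y 1)
          + (Finsupp.single x' 1 + Finsupp.single y' 1)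
        = w + Finsupp.single x' 1 + Finsupp.single y' 1 + Finsupp.single x 1
          + Finsupp.single y 1 := by abel
      _ = u2 + Finsupp.single x' 1 + Finsupp.single y' 1 := h
      _ = u2 + (Finsupp.single x' 1 + Finsupp.single y' 1) := by abel
  exact (addc h').symm

end PolyoAux
namespace PolyoAux
attribute [local instance] Classical.propDecidable
variable {P : Finset Cell}

lemma join_sameLower_half (a1 a2 b1 b2 c1 c2 : ℕ) (w : Mon P)
    (h1 : InnerInterval P (a1, a2) (b1, b2)) (h2 : InnerInterval P (a1, a2) (c1, c2))
    (hlt : b1 < c1 ∨ (b1 = c1 ∧ b2 < c2)) :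
    ∃ r, Star P (w + sE (c1, c2) (vB h2) + sE (b1, a2) (vC h1) + sE (a1, b2) (vD h1)) r ∧
         Star P (w + sE (b1, b2) (vB h1) + sE (c1, a2) (vC h2) + sE (a1, c2) (vD h2)) r := by
  have hA : a1 < b1 := h1.1
  have hB : a2 < b2 := h1.2.1
  have hC : a1 < c1 := h2.1
  have hD : a2 < c2 := h2.2.1
  rcases hlt with hb1lt | ⟨hb1, hb2lt⟩
  · rcases Nat.lt_trichotomy b2 c2 with hb2lt | hb2eq | hb2gt
    · -- b1 < c1, b2 < c2 : two steps from p to q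
      have hI1 : InnerInterval P (b1, a2) (c1, c2) := by
        refine inner_of (by omega) (by omega) ?_
        intro r s hr1 hr2 hs1 hs2
        exact inner_cells h2 r s (by omega) (by omega) (by omega) (by omega)
      have hI2 : InnerInterval P (a1, b2) (b1, c2) := by
        refine inner_of (by omega) (by omega) ?_
        intro r s hr1 hr2 hs1 hs2
        exact inner_cells h2 r s (by omega) (by omega) (by omega) (by omega)
      refine ⟨_, Relation.ReflTransGen.head
        (step_of hI1 (w + sE (a1, b2) (vD h1)) (by abel) rfl)
        (Relation.ReflTransGen.single
          (step_of hI2 (w + sE (c1, a2) (vC hI1)) (by abel) ?_)),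
        Relation.ReflTransGen.refl⟩
      abel
    · -- b1 < c1, b2 = c2 : one step p → q
      subst hb2eq
      have hI : InnerInterval P (b1, a2) (c1, b2) := by
        refine inner_of (by omega) (by omega) ?_
        intro r s hr1 hr2 hs1 hs2
        exact inner_cells h2 r s (by omega) (by omega) (by omega) (by omega)
      exact ⟨_, Relation.ReflTransGen.single
        (step_of hI (w + sE (a1, b2) (vD h1)) (by abel) (by abel)),
        Relation.ReflTransGen.refl⟩
    · -- b1 < c1, c2 < b2 : one step on each side
      have hI1 : InnerInterval P (b1, a2) (c1, c2) := by
        refine inner_of (by omega) (by omega) ?_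
        intro r s hr1 hr2 hs1 hs2
        exact inner_cells h2 r s (by omega) (by omega) (by omega) (by omega)
      have hI2 : InnerInterval P (a1, c2) (b1, b2) := by
        refine inner_of (by omega) (by omega) ?_
        intro r s hr1 hr2 hs1 hs2
        exact inner_cells h1 r s (by omega) (by omega) (by omega) (by omega)
      refine ⟨w + sE (a1, b2) (vD h1) + sE (c1, a2) (vC hI1) + sE (b1, c2) (vD hI1),
        Relation.ReflTransGen.single
          (step_of hI1 (w + sE (a1, b2) (vD h1)) (by abel) (by abel)),
        Relation.ReflTransGen.single
          (step_of hI2 (w + sE (c1, a2) (vC h2)) (by abel) ?_)⟩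
      abel
  · -- b1 = c1, b2 < c2 : one step p → q
    subst hb1
    have hI : InnerInterval P (a1, b2) (b1, c2) := by
      refine inner_of (by omega) (by omega) ?_
      intro r s hr1 hr2 hs1 hs2
      exact inner_cells h2 r s (by omega) (by omega) (by omega) (by omega)
    exact ⟨_, Relation.ReflTransGen.single
      (step_of hI (w + sE (b1, a2) (vC h1)) (by abel) (by abel)),
      Relation.ReflTransGen.refl⟩

end PolyoAux
namespace PolyoAux
attribute [local instance] Classical.propDecidable
variable {P : Finset Cell}

lemma join_sameUpper_half (a1 a2 e1 e2 b1 b2 : ℕ) (w : Mon P)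
    (h1 : InnerInterval P (a1, a2) (b1, b2)) (h2 : InnerInterval P (e1, e2) (b1, b2))
    (hlt : a1 < e1 ∨ (a1 = e1 ∧ a2 < e2)) :
    ∃ r, Star P (w + sE (e1, e2) (vA h2) + sE (b1, a2) (vC h1) + sE (a1, b2) (vD h1)) r ∧
         Star P (w + sE (a1, a2) (vA h1) + sE (b1, e2) (vC h2) + sE (e1, b2) (vD h2)) r := by
  have hA : a1 < b1 := h1.1
  have hB : a2 < b2 := h1.2.1
  have hC : e1 < b1 := h2.1
  have hD : e2 < b2 := h2.2.1
  rcases hlt with ha1lt | ⟨ha1, ha2lt⟩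
  · rcases Nat.lt_trichotomy a2 e2 with ha2lt | ha2eq | ha2gt
    · -- a1 < e1, a2 < e2 : two steps from q to p
      have hI1 : InnerInterval P (a1, a2) (b1, e2) := by
        refine inner_of (by omega) (by omega) ?_
        intro r s hr1 hr2 hs1 hs2
        exact inner_cells h1 r s (by omega) (by omega) (by omega) (by omega)
      have hI2 : InnerInterval P (a1, e2) (e1, b2) := by
        refine inner_of (by omega) (by omega) ?_
        intro r s hr1 hr2 hs1 hs2
        exact inner_cells h1 r s (by omega) (by omega) (by omega) (by omega)
      refine ⟨_, Relation.ReflTransGen.refl, Relation.ReflTransGen.head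
        (step_of hI1 (w + sE (e1, b2) (vD h2)) (by abel) rfl)
        (Relation.ReflTransGen.single
          (step_of hI2 (w + sE (b1, a2) (vC hI1)) (by abel) ?_))⟩
      abel
    · -- a1 < e1, a2 = e2 : one step q → p
      subst ha2eq
      have hI : InnerInterval P (a1, a2) (e1, b2) := by
        refine inner_of (by omega) (by omega) ?_
        intro r s hr1 hr2 hs1 hs2
        exact inner_cells h1 r s (by omega) (by omega) (by omega) (by omega)
      exact ⟨_, Relation.ReflTransGen.refl,
        Relation.ReflTransGen.single
          (step_of hI (w + sE (b1, a2) (vC h2)) (by abel) (by abel))⟩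
    · -- a1 < e1, e2 < a2 : one step on each side
      have hI1 : InnerInterval P (e1, e2) (b1, a2) := by
        refine inner_of (by omega) (by omega) ?_
        intro r s hr1 hr2 hs1 hs2
        exact inner_cells h2 r s (by omega) (by omega) (by omega) (by omega)
      have hI2 : InnerInterval P (a1, a2) (e1, b2) := by
        refine inner_of (by omega) (by omega) ?_
        intro r s hr1 hr2 hs1 hs2
        exact inner_cells h1 r s (by omega) (by omega) (by omega) (by omega)
      refine ⟨w + sE (a1, b2) (vD h1) + sE (b1, e2) (vC hI1) + sE (e1, a2) (vD hI1),
        Relation.ReflTransGen.single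
          (step_of hI1 (w + sE (a1, b2) (vD h1)) (by abel) (by abel)),
        Relation.ReflTransGen.single
          (step_of hI2 (w + sE (b1, e2) (vC h2)) (by abel) ?_)⟩
      abel
  · -- a1 = e1, a2 < e2 : one step q → p
    subst ha1
    have hI : InnerInterval P (a1, a2) (b1, e2) := by
      refine inner_of (by omega) (by omega) ?_
      intro r s hr1 hr2 hs1 hs2
      exact inner_cells h1 r s (by omega) (by omega) (by omega) (by omega)
    exact ⟨_, Relation.ReflTransGen.refl,
      Relation.ReflTransGen.single
        (step_of hI (w + sE (a1, b2) (vD h2)) (by abel) (by abel))⟩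

lemma join_chained (H : ∀ a b c : ℕ × ℕ, InnerInterval P a b → InnerInterval P b c →
      (InnerInterval P (b.1, a.2) c ∨ InnerInterval P (a.1, b.2) c))
    (a1 a2 b1 b2 c1 c2 : ℕ) (w : Mon P)
    (h1 : InnerInterval P (a1, a2) (b1, b2)) (h2 : InnerInterval P (b1, b2) (c1, c2)) :
    ∃ r, Star P (w + sE (c1, c2) (vB h2) + sE (b1, a2) (vC h1) + sE (a1, b2) (vD h1)) r ∧
         Star P (w + sE (a1, a2) (vA h1) + sE (c1, b2) (vC h2) + sE (b1, c2) (vD h2)) r := by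
  have hA : a1 < b1 := h1.1
  have hB : a2 < b2 := h1.2.1
  have hC : b1 < c1 := h2.1
  have hD : b2 < c2 := h2.2.1
  rcases H (a1, a2) (b1, b2) (c1, c2) h1 h2 with hE | hDD
  · -- [(b1,a2),(c1,c2)] is inner
    have hI : InnerInterval P (a1, a2) (c1, b2) := by
      refine inner_of (by omega) (by omega) ?_
      intro r s hr1 hr2 hs1 hs2
      rcases Nat.lt_or_ge r b1 with h' | h'
      · exact inner_cells h1 r s (by omega) (by omega) (by omega) (by omega)
      · exact inner_cells hE r s (by omega) (by omega) (by omega) (by omega)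
    refine ⟨w + sE (a1, b2) (vD h1) + sE (c1, a2) (vC hE) + sE (b1, c2) (vD hE),
      Relation.ReflTransGen.single
        (step_of hE (w + sE (a1, b2) (vD h1)) (by abel) (by abel)),
      Relation.ReflTransGen.single
        (step_of hI (w + sE (b1, c2) (vD h2)) (by abel) ?_)⟩
    abel
  · -- [(a1,b2),(c1,c2)] is inner
    have hI : InnerInterval P (a1, a2) (b1, c2) := by
      refine inner_of (by omega) (by omega) ?_
      intro r s hr1 hr2 hs1 hs2
      rcases Nat.lt_or_ge s b2 with h' | h'
      · exact inner_cells h1 r s (by omega) (by omega) (by omega) (by omega)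
      · exact inner_cells hDD r s (by omega) (by omega) (by omega) (by omega)
    refine ⟨w + sE (b1, a2) (vC h1) + sE (c1, b2) (vC hDD) + sE (a1, c2) (vD hDD),
      Relation.ReflTransGen.single
        (step_of hDD (w + sE (b1, a2) (vC h1)) (by abel) (by abel)),
      Relation.ReflTransGen.single
        (step_of hI (w + sE (c1, b2) (vC h2)) (by abel) ?_)⟩
    abel

end PolyoAux
namespace PolyoAux
attribute [local instance] Classical.propDecidable
variable {P : Finset Cell}

lemma join_sameLower (a1 a2 b1 b2 c1 c2 : ℕ) (w : Mon P)
    (h1 : InnerInterval P (a1, a2) (b1, b2)) (h2 : InnerInterval P (a1, a2) (c1, c2))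
    (hne : ((b1, b2) : ℕ × ℕ) ≠ (c1, c2)) :
    ∃ r, Star P (w + sE (c1, c2) (vB h2) + sE (b1, a2) (vC h1) + sE (a1, b2) (vD h1)) r ∧
         Star P (w + sE (b1, b2) (vB h1) + sE (c1, a2) (vC h2) + sE (a1, c2) (vD h2)) r := by
  have hne' : b1 ≠ c1 ∨ b2 ≠ c2 := by
    by_contra h
    push_neg at h
    exact hne (by rw [h.1, h.2])
  rcases (by omega : (b1 < c1 ∨ (b1 = c1 ∧ b2 < c2)) ∨ (c1 < b1 ∨ (c1 = b1 ∧ c2 < b2)))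
    with hc | hc
  · exact join_sameLower_half a1 a2 b1 b2 c1 c2 w h1 h2 hc
  · obtain ⟨r, s1, s2⟩ := join_sameLower_half a1 a2 c1 c2 b1 b2 w h2 h1 hc
    exact ⟨r, s2, s1⟩

lemma join_sameUpper (a1 a2 e1 e2 b1 b2 : ℕ) (w : Mon P)
    (h1 : InnerInterval P (a1, a2) (b1, b2)) (h2 : InnerInterval P (e1, e2) (b1, b2))
    (hne : ((a1, a2) : ℕ × ℕ) ≠ (e1, e2)) :
    ∃ r, Star P (w + sE (e1, e2) (vA h2) + sE (b1, a2) (vC h1) + sE (a1, b2) (vD h1)) r ∧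
         Star P (w + sE (a1, a2) (vA h1) + sE (b1, e2) (vC h2) + sE (e1, b2) (vD h2)) r := by
  have hne' : a1 ≠ e1 ∨ a2 ≠ e2 := by
    by_contra h
    push_neg at h
    exact hne (by rw [h.1, h.2])
  rcases (by omega : (a1 < e1 ∨ (a1 = e1 ∧ a2 < e2)) ∨ (e1 < a1 ∨ (e1 = a1 ∧ e2 < a2)))
    with hc | hc
  · exact join_sameUpper_half a1 a2 e1 e2 b1 b2 w h1 h2 hc
  · obtain ⟨r, s1, s2⟩ := join_sameUpper_half e1 e2 a1 a2 b1 b2 w h2 h1 hc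
    exact ⟨r, s2, s1⟩

theorem loc_conf (H : ∀ a b c : ℕ × ℕ, InnerInterval P a b → InnerInterval P b c →
      (InnerInterval P (b.1, a.2) c ∨ InnerInterval P (a.1, b.2) c)) : LocConf P := by
  rintro m p q ⟨u1, A, B, C, D, hin1, hC1, hD1, hm1, rfl⟩
    ⟨u2, A', B', C', D', hin2, hC2, hD2, hm2, rfl⟩
  subst hm1
  obtain ⟨⟨a1, a2⟩, hA⟩ := A
  obtain ⟨⟨b1, b2⟩, hB⟩ := B
  obtain ⟨⟨x1, x2⟩, hCm⟩ := C
  obtain ⟨⟨y1, y2⟩, hDm⟩ := D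
  obtain ⟨⟨a1', a2'⟩, hA'⟩ := A'
  obtain ⟨⟨b1', b2'⟩, hB'⟩ := B'
  obtain ⟨⟨x1', x2'⟩, hCm'⟩ := C'
  obtain ⟨⟨y1', y2'⟩, hDm'⟩ := D'
  simp only [Prod.mk.injEq] at hC1 hD1 hC2 hD2
  obtain ⟨h1, h2⟩ := hC1
  obtain ⟨h3, h4⟩ := hD1
  obtain ⟨h5, h6⟩ := hC2
  obtain ⟨h7, h8⟩ := hD2
  subst x1 x2 y1 y2 x1' x2' y1' y2'
  have ha : a1 < b1 := hin1.1
  have hb : a2 < b2 := hin1.2.1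
  have ha' : a1' < b1' := hin2.1
  have hb' : a2' < b2' := hin2.2.1
  by_cases hAA : ((a1, a2) : ℕ × ℕ) = (a1', a2')
  · rw [Prod.mk.injEq] at hAA
    obtain ⟨rfl, rfl⟩ := hAA
    by_cases hBB : ((b1, b2) : ℕ × ℕ) = (b1', b2')
    · -- identical reductions
      rw [Prod.mk.injEq] at hBB
      obtain ⟨rfl, rfl⟩ := hBB
      have hu : u1 = u2 := by
        have h' : u1 + (Finsupp.single (⟨(a1, a2), hA⟩ : σP P) 1
            + Finsupp.single (⟨(b1, b2), hB⟩ : σP P) 1)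
            = u2 + (Finsupp.single (⟨(a1, a2), hA⟩ : σP P) 1
            + Finsupp.single (⟨(b1, b2), hB⟩ : σP P) 1) := by
          calc u1 + (Finsupp.single (⟨(a1, a2), hA⟩ : σP P) 1
              + Finsupp.single (⟨(b1, b2), hB⟩ : σP P) 1)
              = u1 + Finsupp.single ⟨(a1, a2), hA⟩ 1 + Finsupp.single ⟨(b1, b2), hB⟩ 1 := by
                abel
            _ = u2 + Finsupp.single ⟨(a1, a2), hA'⟩ 1
                + Finsupp.single ⟨(b1, b2), hB'⟩ 1 := hm2
            _ = u2 + (Finsupp.single (⟨(a1, a2), hA⟩ : σP P) 1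
                + Finsupp.single (⟨(b1, b2), hB⟩ : σP P) 1) := by abel
        exact addc h'
      subst hu
      exact ⟨_, Relation.ReflTransGen.refl, Relation.ReflTransGen.refl⟩
    · -- same lower corner
      have hne : (⟨(b1', b2'), hB'⟩ : σP P) ≠ ⟨(b1, b2), hB⟩ :=
        fun h => hBB (congrArg Subtype.val h).symm
      have h' : u1 + Finsupp.single (⟨(b1, b2), hB⟩ : σP P) 1
          = u2 + Finsupp.single (⟨(b1', b2'), hB'⟩ : σP P) 1 := by
        apply addc (s := Finsupp.single (⟨(a1, a2), hA⟩ : σP P) 1)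
        calc u1 + Finsupp.single (⟨(b1, b2), hB⟩ : σP P) 1
              + Finsupp.single (⟨(a1, a2), hA⟩ : σP P) 1
            = u1 + Finsupp.single ⟨(a1, a2), hA⟩ 1 + Finsupp.single ⟨(b1, b2), hB⟩ 1 := by
              abel
          _ = u2 + Finsupp.single ⟨(a1, a2), hA'⟩ 1
              + Finsupp.single ⟨(b1', b2'), hB'⟩ 1 := hm2
          _ = u2 + Finsupp.single (⟨(b1', b2'), hB'⟩ : σP P) 1
              + Finsupp.single (⟨(a1, a2), hA⟩ : σP P) 1 := by abel
      obtain ⟨w, hw1, hw2⟩ := peel1 h' hne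
      obtain ⟨r, s1, s2⟩ := join_sameLower a1 a2 b1 b2 b1' b2' w hin1 hin2 (by
        intro h; exact hBB h)
      exact ⟨r, star_eq (by rw [hw1]; try abel) s1, star_eq (by rw [hw2]; try abel) s2⟩
  · by_cases hBB : ((b1, b2) : ℕ × ℕ) = (b1', b2')
    · -- same upper corner
      rw [Prod.mk.injEq] at hBB
      obtain ⟨rfl, rfl⟩ := hBB
      have hne : (⟨(a1', a2'), hA'⟩ : σP P) ≠ ⟨(a1, a2), hA⟩ :=
        fun h => hAA (congrArg Subtype.val h).symm
      have h' : u1 + Finsupp.single (⟨(a1, a2), hA⟩ : σP P) 1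
          = u2 + Finsupp.single (⟨(a1', a2'), hA'⟩ : σP P) 1 := by
        apply addc (s := Finsupp.single (⟨(b1, b2), hB⟩ : σP P) 1)
        calc u1 + Finsupp.single (⟨(a1, a2), hA⟩ : σP P) 1
              + Finsupp.single (⟨(b1, b2), hB⟩ : σP P) 1
            = u1 + Finsupp.single ⟨(a1, a2), hA⟩ 1 + Finsupp.single ⟨(b1, b2), hB⟩ 1 := by
              abel
          _ = u2 + Finsupp.single ⟨(a1', a2'), hA'⟩ 1
              + Finsupp.single ⟨(b1, b2), hB'⟩ 1 := hm2
          _ = u2 + Finsupp.single (⟨(a1', a2'), hA'⟩ : σP P) 1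
              + Finsupp.single (⟨(b1, b2), hB⟩ : σP P) 1 := by abel
      obtain ⟨w, hw1, hw2⟩ := peel1 h' hne
      obtain ⟨r, s1, s2⟩ := join_sameUpper a1 a2 a1' a2' b1 b2 w hin1 hin2 (by
        intro h; exact hAA h)
      exact ⟨r, star_eq (by rw [hw1]; try abel) s1, star_eq (by rw [hw2]; try abel) s2⟩
    · by_cases hBA' : ((b1, b2) : ℕ × ℕ) = (a1', a2')
      · -- chained : second interval sits on top of the first
        rw [Prod.mk.injEq] at hBA'
        obtain ⟨rfl, rfl⟩ := hBA'
        have hne : (⟨(b1', b2'), hB'⟩ : σP P) ≠ ⟨(a1, a2), hA⟩ := by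
          intro h
          have := congrArg Subtype.val h
          simp only [Prod.mk.injEq] at this
          omega
        have h' : u1 + Finsupp.single (⟨(a1, a2), hA⟩ : σP P) 1
            = u2 + Finsupp.single (⟨(b1', b2'), hB'⟩ : σP P) 1 := by
          apply addc (s := Finsupp.single (⟨(b1, b2), hB⟩ : σP P) 1)
          calc u1 + Finsupp.single (⟨(a1, a2), hA⟩ : σP P) 1
                + Finsupp.single (⟨(b1, b2), hB⟩ : σP P) 1
              = u1 + Finsupp.single ⟨(a1, a2), hA⟩ 1 + Finsupp.single ⟨(b1, b2), hB⟩ 1 := by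
                abel
            _ = u2 + Finsupp.single ⟨(b1, b2), hA'⟩ 1
                + Finsupp.single ⟨(b1', b2'), hB'⟩ 1 := hm2
            _ = u2 + Finsupp.single (⟨(b1', b2'), hB'⟩ : σP P) 1
                + Finsupp.single (⟨(b1, b2), hB⟩ : σP P) 1 := by abel
        obtain ⟨w, hw1, hw2⟩ := peel1 h' hne
        obtain ⟨r, s1, s2⟩ := join_chained H a1 a2 b1 b2 b1' b2' w hin1 hin2
        exact ⟨r, star_eq (by rw [hw1]; try abel) s1, star_eq (by rw [hw2]; try abel) s2⟩
      · by_cases hAB' : ((a1, a2) : ℕ × ℕ) = (b1', b2')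
        · -- chained : first interval sits on top of the second
          rw [Prod.mk.injEq] at hAB'
          obtain ⟨rfl, rfl⟩ := hAB'
          have hne : (⟨(a1', a2'), hA'⟩ : σP P) ≠ ⟨(b1, b2), hB⟩ := by
            intro h
            have := congrArg Subtype.val h
            simp only [Prod.mk.injEq] at this
            omega
          have h' : u1 + Finsupp.single (⟨(b1, b2), hB⟩ : σP P) 1
              = u2 + Finsupp.single (⟨(a1', a2'), hA'⟩ : σP P) 1 := by
            apply addc (s := Finsupp.single (⟨(a1, a2), hA⟩ : σP P) 1)
            calc u1 + Finsupp.single (⟨(b1, b2), hB⟩ : σP P) 1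
                  + Finsupp.single (⟨(a1, a2), hA⟩ : σP P) 1
                = u1 + Finsupp.single ⟨(a1, a2), hA⟩ 1
                  + Finsupp.single ⟨(b1, b2), hB⟩ 1 := by abel
              _ = u2 + Finsupp.single ⟨(a1', a2'), hA'⟩ 1
                  + Finsupp.single ⟨(a1, a2), hB'⟩ 1 := hm2
              _ = u2 + Finsupp.single (⟨(a1', a2'), hA'⟩ : σP P) 1
                  + Finsupp.single (⟨(a1, a2), hA⟩ : σP P) 1 := by abel
          obtain ⟨w, hw1, hw2⟩ := peel1 h' hne
          obtain ⟨r, s1, s2⟩ := join_chained H a1' a2' a1 a2 b1 b2 w hin2 hin1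
          exact ⟨r, star_eq (by rw [hw1]; try abel) s2, star_eq (by rw [hw2]; try abel) s1⟩
        · -- disjoint supports : the two reductions commute
          have n1 : (⟨(a1', a2'), hA'⟩ : σP P) ≠ ⟨(a1, a2), hA⟩ :=
            fun h => hAA (congrArg Subtype.val h).symm
          have n2 : (⟨(a1', a2'), hA'⟩ : σP P) ≠ ⟨(b1, b2), hB⟩ :=
            fun h => hBA' (congrArg Subtype.val h).symm
          have n3 : (⟨(b1', b2'), hB'⟩ : σP P) ≠ ⟨(a1, a2), hA⟩ :=
            fun h => hAB' (congrArg Subtype.val h).symm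
          have n4 : (⟨(b1', b2'), hB'⟩ : σP P) ≠ ⟨(b1, b2), hB⟩ :=
            fun h => hBB (congrArg Subtype.val h).symm
          have n5 : (⟨(a1', a2'), hA'⟩ : σP P) ≠ ⟨(b1', b2'), hB'⟩ := by
            intro h
            have := congrArg Subtype.val h
            simp only [Prod.mk.injEq] at this
            omega
          obtain ⟨w, hw1, hw2⟩ := peel2 hm2 n1 n2 n3 n4 n5
          refine ⟨w + sE (b1, a2) (vC hin1) + sE (a1, b2) (vD hin1)
              + sE (b1', a2') (vC hin2) + sE (a1', b2') (vD hin2),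
            Relation.ReflTransGen.single (step_of hin2
              (w + sE (b1, a2) (vC hin1) + sE (a1, b2) (vD hin1))
              (by rw [hw1]; try abel) (by abel)),
            Relation.ReflTransGen.single (step_of hin1
              (w + sE (b1', a2') (vC hin2) + sE (a1', b2') (vD hin2))
              (by rw [hw2]; try abel) (by abel))⟩

end PolyoAux
namespace PolyoAux
attribute [local instance] Classical.propDecidable
open MvPolynomial
variable {K : Type*} [Field K] {P : Finset Cell}

lemma X_mul_X (x y : σP P) :
    (X x * X y : MvPolynomial (σP P) K)
      = monomial (Finsupp.single x 1 + Finsupp.single y 1) 1 := by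
  rw [X, X, monomial_mul, one_mul]

lemma minor_eq (A B C D : σP P) :
    (X A * X B - X C * X D : MvPolynomial (σP P) K)
      = monomial (Finsupp.single A 1 + Finsupp.single B 1) 1
        - monomial (Finsupp.single C 1 + Finsupp.single D 1) 1 := by
  rw [X_mul_X, X_mul_X]

/-- A step attached to the data of an inner minor. -/
lemma step_minor {A B C D : σP P} (hin : InnerInterval P A.1 B.1)
    (hC : C.1 = (B.1.1, A.1.2)) (hD : D.1 = (A.1.1, B.1.2)) (u : Mon P) :
    Step P (u + (Finsupp.single A 1 + Finsupp.single B 1))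
      (u + (Finsupp.single C 1 + Finsupp.single D 1)) :=
  ⟨u, A, B, C, D, hin, hC, hD, (add_assoc _ _ _).symm, (add_assoc _ _ _).symm⟩

/-- View a polynomial as a finitely supported function on monomials. -/
def toF (f : MvPolynomial (σP P) K) : Mon P →₀ K := AddMonoidAlgebra.coeff f

/-- The linearization of the normal form map. -/
noncomputable def Nmap (K : Type*) [Field K] (P : Finset Cell)
    (f : MvPolynomial (σP P) K) : MvPolynomial (σP P) K :=
  AddMonoidAlgebra.ofCoeff (Finsupp.mapDomain (nf P) (AddMonoidAlgebra.coeff f))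

lemma Nmap_add (f g : MvPolynomial (σP P) K) :
    Nmap K P (f + g) = Nmap K P f + Nmap K P g :=
  congrArg AddMonoidAlgebra.ofCoeff Finsupp.mapDomain_add

lemma Nmap_zero : Nmap K P 0 = 0 := congrArg AddMonoidAlgebra.ofCoeff Finsupp.mapDomain_zero

lemma Nmap_monomial (m : Mon P) (c : K) :
    Nmap K P (monomial m c) = monomial (nf P m) c := by
  rw [← single_eq_monomial, ← single_eq_monomial]
  exact congrArg AddMonoidAlgebra.ofCoeff Finsupp.mapDomain_single

lemma Nmap_sub (f g : MvPolynomial (σP P) K) :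
    Nmap K P (f - g) = Nmap K P f - Nmap K P g := by
  have h := Nmap_add (f - g) g
  rw [sub_add_cancel] at h
  exact eq_sub_of_add_eq h.symm

lemma Nmap_mul_minor (hl : LocConf P) (p g : MvPolynomial (σP P) K)
    (hg : g ∈ innerMinors K P) : Nmap K P (p * g) = 0 := by
  obtain ⟨A, B, C, D, hin, hC, hD, rfl⟩ := hg
  induction p using MvPolynomial.induction_on' with
  | add p q hp hq => rw [add_mul, Nmap_add, hp, hq, add_zero]
  | monomial u c =>
    rw [minor_eq, mul_sub, monomial_mul, monomial_mul, Nmap_sub, Nmap_monomial, Nmap_monomial,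
      nf_step hl (step_minor hin hC hD u), sub_self]

lemma Nmap_ideal (hl : LocConf P) {f : MvPolynomial (σP P) K}
    (hf : f ∈ innerIdeal K P) : Nmap K P f = 0 := by
  have main : ∀ p : MvPolynomial (σP P) K, Nmap K P (p * f) = 0 := by
    refine Submodule.span_induction
      (p := fun x _ => ∀ p : MvPolynomial (σP P) K, Nmap K P (p * x) = 0) ?_ ?_ ?_ ?_ hf
    · intro x hx p
      exact Nmap_mul_minor hl p x hx
    · intro p
      rw [mul_zero, Nmap_zero]
    · intro x y _ _ ihx ihy p
      rw [mul_add, Nmap_add, ihx p, ihy p, add_zero]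
    · intro a x _ ih p
      rw [smul_eq_mul, ← mul_assoc, ih]
  have h1 := main 1
  rwa [one_mul] at h1

lemma exists_lead {f : MvPolynomial (σP P) K} (hf : f ≠ 0) : ∃ m, IsLeadMon f m := by
  obtain ⟨m, hm, hmax⟩ := exists_greatest (fun x y : Mon P => monLt x y)
    (fun x y z h1 h2 => monLt_trans h1 h2)
    (fun x y => by
      rcases eq_or_ne x y with h | h
      · exact Or.inl h
      · exact Or.inr (monLt_trichot h))
    f.support (MvPolynomial.support_nonempty.mpr hf)
  exact ⟨m, hm, hmax⟩

lemma lead_unique {f : MvPolynomial (σP P) K} {m m' : Mon P}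
    (h : IsLeadMon f m) (h' : IsLeadMon f m') : m = m' := by
  by_contra hne
  exact monLt_asymm (h.2 m' h'.1 (fun he => hne he.symm)) (h'.2 m h.1 hne)

lemma lead_reducible (hl : LocConf P) {f : MvPolynomial (σP P) K}
    (hf : f ∈ innerIdeal K P) (hne : f ≠ 0) {mf : Mon P} (hm : IsLeadMon f mf) :
    ∃ m', Step P mf m' := by
  by_contra hirr
  have hnf : nf P mf = mf := by
    rw [nf_eq, dif_neg hirr]
  have h0 : Nmap K P f = 0 := Nmap_ideal hl hf
  have hval : (Finsupp.mapDomain (nf P) (toF f)) mf = toF f mf := by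
    rw [Finsupp.mapDomain, Finsupp.sum_apply]
    rw [Finsupp.sum]
    refine Finset.sum_eq_single_of_mem mf hm.1 ?_ |>.trans ?_
    · intro m hms hmne
      have hlt : monLt m mf := hm.2 m hms hmne
      have : nf P m ≠ mf := by
        rcases nf_le (P := P) m with he | hl'
        · rw [he]; exact hmne
        · intro hc
          have h2 : monLt (nf P m) mf := monLt_trans hl' hlt
          rw [hc] at h2
          exact monLt_irrefl mf h2
      exact Finsupp.single_eq_of_ne' this
    · rw [hnf]
      exact Finsupp.single_eq_same
  have hfmf : MvPolynomial.coeff mf f ≠ 0 := by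
    have := hm.1
    rw [MvPolynomial.mem_support_iff] at this
    exact this
  apply hfmf
  have hco : MvPolynomial.coeff mf f = toF f mf := rfl
  rw [hco, ← hval]
  have h3 : AddMonoidAlgebra.coeff (Nmap K P f) = Finsupp.mapDomain (nf P) (toF f) := rfl
  rw [← h3, h0]
  rfl

end PolyoAux
namespace PolyoAux
attribute [local instance] Classical.propDecidable
open MvPolynomial
variable {K : Type*} [Field K] {P : Finset Cell} {A B C D : σP P}

lemma minor_mon_ne (hin : InnerInterval P A.1 B.1)
    (hC : C.1 = (B.1.1, A.1.2)) (hD : D.1 = (A.1.1, B.1.2)) :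
    (Finsupp.single C 1 + Finsupp.single D 1 : Mon P)
      ≠ (Finsupp.single A 1 + Finsupp.single B 1) := by
  have h1 : A.1.1 < B.1.1 := hin.1
  have h2 : A.1.2 < B.1.2 := hin.2.1
  have hAB : A ≠ B := fun h => by rw [h] at h1; exact lt_irrefl _ h1
  have hCB : C ≠ B := fun h => by rw [← h, hC] at h2; exact lt_irrefl _ h2
  have hDB : D ≠ B := fun h => by rw [← h, hD] at h1; exact lt_irrefl _ h1
  intro he
  have hv := DFunLike.congr_fun he B
  simp only [Finsupp.add_apply, Finsupp.single_eq_same, Finsupp.single_eq_of_ne' hCB,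
    Finsupp.single_eq_of_ne' hDB, Finsupp.single_eq_of_ne' hAB] at hv
  omega

lemma minor_coeff_AB (hin : InnerInterval P A.1 B.1)
    (hC : C.1 = (B.1.1, A.1.2)) (hD : D.1 = (A.1.1, B.1.2)) :
    MvPolynomial.coeff (Finsupp.single A 1 + Finsupp.single B 1)
      (X A * X B - X C * X D : MvPolynomial (σP P) K) = 1 := by
  rw [minor_eq, coeff_sub, coeff_monomial, coeff_monomial, if_pos rfl,
    if_neg (minor_mon_ne hin hC hD), sub_zero]

lemma minor_coeff_CD (hin : InnerInterval P A.1 B.1)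
    (hC : C.1 = (B.1.1, A.1.2)) (hD : D.1 = (A.1.1, B.1.2)) :
    MvPolynomial.coeff (Finsupp.single C 1 + Finsupp.single D 1)
      (X A * X B - X C * X D : MvPolynomial (σP P) K) = -1 := by
  rw [minor_eq, coeff_sub, coeff_monomial, coeff_monomial, if_pos rfl,
    if_neg (fun h => minor_mon_ne hin hC hD h.symm), zero_sub]

lemma minor_support (hin : InnerInterval P A.1 B.1)
    (hC : C.1 = (B.1.1, A.1.2)) (hD : D.1 = (A.1.1, B.1.2)) :
    (X A * X B - X C * X D : MvPolynomial (σP P) K).support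
      = {Finsupp.single A 1 + Finsupp.single B 1,
         Finsupp.single C 1 + Finsupp.single D 1} := by
  ext m
  rw [MvPolynomial.mem_support_iff, minor_eq, coeff_sub, coeff_monomial, coeff_monomial,
    Finset.mem_insert, Finset.mem_singleton]
  by_cases h1 : Finsupp.single A 1 + Finsupp.single B 1 = m
  · subst h1
    rw [if_pos rfl, if_neg (minor_mon_ne hin hC hD)]
    simp
  · rw [if_neg h1]
    by_cases h2 : Finsupp.single C 1 + Finsupp.single D 1 = m
    · subst h2
      rw [if_pos rfl]
      simp
    · rw [if_neg h2]
      simp only [sub_zero, sub_self]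
      constructor
      · intro h; exact absurd rfl h
      · rintro (h | h)
        · exact absurd h.symm h1
        · exact absurd h.symm h2

lemma minor_lead (hin : InnerInterval P A.1 B.1)
    (hC : C.1 = (B.1.1, A.1.2)) (hD : D.1 = (A.1.1, B.1.2)) :
    IsLeadMon (X A * X B - X C * X D : MvPolynomial (σP P) K)
      (Finsupp.single A 1 + Finsupp.single B 1) := by
  constructor
  · rw [MvPolynomial.mem_support_iff, minor_coeff_AB hin hC hD]
    exact one_ne_zero
  · intro m' hm' hne
    rw [minor_support hin hC hD, Finset.mem_insert, Finset.mem_singleton] at hm'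
    rcases hm' with h | h
    · exact absurd h hne
    · subst h
      have hstep := step_minor hin hC hD 0
      rw [zero_add, zero_add] at hstep
      exact step_monLt hstep

lemma pair_sum (x y : σP P) :
    ((Finsupp.single x 1 + Finsupp.single y 1 : Mon P).sum fun _ e => e) = 2 := by
  rw [Finsupp.sum_add_index' (fun _ => rfl) (fun _ _ _ => rfl),
    Finsupp.sum_single_index rfl, Finsupp.sum_single_index rfl]

lemma minor_totalDegree (hin : InnerInterval P A.1 B.1)
    (hC : C.1 = (B.1.1, A.1.2)) (hD : D.1 = (A.1.1, B.1.2)) :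
    (X A * X B - X C * X D : MvPolynomial (σP P) K).totalDegree = 2 := by
  rw [MvPolynomial.totalDegree, minor_support hin hC hD, Finset.sup_insert,
    Finset.sup_singleton, pair_sum, pair_sum]
  rfl

lemma one_le_pair {x y z : σP P}
    (h : 1 ≤ (Finsupp.single x 1 + Finsupp.single y 1 : Mon P) z) : z = x ∨ z = y := by
  by_contra hc
  push_neg at hc
  rw [Finsupp.add_apply, Finsupp.single_eq_of_ne' (fun he => hc.1 he.symm),
    Finsupp.single_eq_of_ne' (fun he => hc.2 he.symm)] at h
  omega

lemma one_le_triple {x y w z : σP P}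
    (h : 1 ≤ (Finsupp.single x 1 + Finsupp.single y 1 + Finsupp.single w 1 : Mon P) z) :
    z = x ∨ z = y ∨ z = w := by
  by_contra hc
  push_neg at hc
  rw [Finsupp.add_apply, Finsupp.add_apply, Finsupp.single_eq_of_ne' (fun he => hc.1 he.symm),
    Finsupp.single_eq_of_ne' (fun he => hc.2.1 he.symm),
    Finsupp.single_eq_of_ne' (fun he => hc.2.2 he.symm)] at h
  omega

lemma le_of_eq_add {m m' dd : Mon P} (h : m = m' + dd) (z : σP P) : m' z ≤ m z := by
  rw [h]
  simp [Finsupp.add_apply]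

end PolyoAux
namespace PolyoAux
attribute [local instance] Classical.propDecidable
open MvPolynomial
variable {K : Type*} [Field K] {P : Finset Cell}

lemma X3 (x y z : σP P) :
    (X x * X y * X z : MvPolynomial (σP P) K)
      = monomial (Finsupp.single x 1 + Finsupp.single y 1 + Finsupp.single z 1) 1 := by
  rw [X_mul_X, X, monomial_mul, one_mul]

lemma support_pair {u v : Mon P} (huv : u ≠ v) :
    (monomial u (1:K) - monomial v 1).support = {u, v} := by
  ext m
  rw [MvPolynomial.mem_support_iff, coeff_sub, coeff_monomial, coeff_monomial,
    Finset.mem_insert, Finset.mem_singleton]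
  by_cases h1 : u = m
  · subst h1
    rw [if_pos rfl, if_neg (fun h => huv h.symm)]
    simp
  · rw [if_neg h1]
    by_cases h2 : v = m
    · subst h2
      rw [if_pos rfl]
      simp
    · rw [if_neg h2]
      simp only [sub_zero, sub_self]
      constructor
      · intro h
        exact absurd rfl h
      · rintro (h | h)
        · exact absurd h.symm h1
        · exact absurd h.symm h2
end PolyoAux

theorem reduced_groebner_iff_aux (K : Type*) [Field K] (P : Finset Cell) :
    (IsReducedGroebnerBasis (innerMinors K P) (innerIdeal K P) ∧
        ∀ g ∈ innerMinors K P, MvPolynomial.totalDegree g = 2) ↔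
      ∀ a b c : ℕ × ℕ, InnerInterval P a b → InnerInterval P b c →
        (InnerInterval P (b.1, a.2) c ∨ InnerInterval P (a.1, b.2) c) := by
  classical
  open PolyoAux MvPolynomial in
  constructor
  · rintro ⟨⟨⟨_, hGB⟩, _, _⟩, _⟩ a b c hab hbc
    set A : σP P := ⟨a, vA hab⟩ with hAdef
    set B : σP P := ⟨b, vB hab⟩ with hBdef
    set Cc : σP P := ⟨c, vB hbc⟩ with hCcdef
    set E : σP P := ⟨(b.1, a.2), vC hab⟩ with hEdef
    set D : σP P := ⟨(a.1, b.2), vD hab⟩ with hDdef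
    set E' : σP P := ⟨(c.1, b.2), vC hbc⟩ with hE'def
    set D' : σP P := ⟨(b.1, c.2), vD hbc⟩ with hD'def
    have ha1 : a.1 < b.1 := hab.1
    have ha2 : a.2 < b.2 := hab.2.1
    have hb1 : b.1 < c.1 := hbc.1
    have hb2 : b.2 < c.2 := hbc.2.1
    have hg1 : (X A * X B - X E * X D : MvPolynomial (σP P) K) ∈ innerMinors K P :=
      ⟨A, B, E, D, hab, rfl, rfl, rfl⟩
    have hg2 : (X B * X Cc - X E' * X D' : MvPolynomial (σP P) K) ∈ innerMinors K P :=
      ⟨B, Cc, E', D', hbc, rfl, rfl, rfl⟩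
    set f : MvPolynomial (σP P) K := X A * X E' * X D' - X E * X D * X Cc with hfdef
    have hf_eq : f = X Cc * (X A * X B - X E * X D) - X A * (X B * X Cc - X E' * X D') := by
      rw [hfdef]; ring
    have hfI : f ∈ innerIdeal K P := by
      rw [hf_eq]
      exact Ideal.sub_mem _ (Ideal.mul_mem_left _ _ (Ideal.subset_span hg1))
        (Ideal.mul_mem_left _ _ (Ideal.subset_span hg2))
    set m1 : Mon P := Finsupp.single A 1 + Finsupp.single E' 1 + Finsupp.single D' 1 with hm1def
    set m2 : Mon P := Finsupp.single E 1 + Finsupp.single D 1 + Finsupp.single Cc 1 with hm2def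
    have hf_eq2 : f = monomial m1 1 - monomial m2 1 := by
      rw [hfdef, X3, X3, hm1def, hm2def]
    -- none of the five variables besides `Cc` equals `Cc`
    have hACc : A ≠ Cc := fun h => by
      have h2 : a = c := congrArg Subtype.val h
      have h3 : a.1 = c.1 := congrArg Prod.fst h2
      omega
    have hE'Cc : E' ≠ Cc := fun h => by
      have h2 : ((c.1, b.2) : ℕ × ℕ) = c := congrArg Subtype.val h
      have h3 := congrArg Prod.snd h2
      have h4 : b.2 = c.2 := h3
      omega
    have hD'Cc : D' ≠ Cc := fun h => by
      have h2 : ((b.1, c.2) : ℕ × ℕ) = c := congrArg Subtype.val h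
      have h3 := congrArg Prod.fst h2
      have h4 : b.1 = c.1 := h3
      omega
    have hECc : E ≠ Cc := fun h => by
      have h2 : ((b.1, a.2) : ℕ × ℕ) = c := congrArg Subtype.val h
      have h3 := congrArg Prod.fst h2
      have h4 : b.1 = c.1 := h3
      omega
    have hDCc : D ≠ Cc := fun h => by
      have h2 : ((a.1, b.2) : ℕ × ℕ) = c := congrArg Subtype.val h
      have h3 := congrArg Prod.fst h2
      have h4 : a.1 = c.1 := h3
      omega
    have hm1Cc : m1 Cc = 0 := by
      rw [hm1def]
      simp [Finsupp.add_apply, Finsupp.single_eq_of_ne' hACc, Finsupp.single_eq_of_ne' hE'Cc,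
        Finsupp.single_eq_of_ne' hD'Cc]
    have hm2Cc : m2 Cc = 1 := by
      rw [hm2def]
      simp [Finsupp.add_apply, Finsupp.single_eq_of_ne' hECc, Finsupp.single_eq_of_ne' hDCc,
        Finsupp.single_eq_same]
    have hm12 : m1 ≠ m2 := fun h => by
      rw [h] at hm1Cc
      rw [hm1Cc] at hm2Cc
      exact zero_ne_one hm2Cc
    have hfne : f ≠ 0 := fun h => by
      have : MvPolynomial.coeff m2 f = 0 := by rw [h, coeff_zero]
      rw [hf_eq2, coeff_sub, coeff_monomial, coeff_monomial, if_neg hm12, if_pos rfl] at this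
      simp at this
    -- m2 is the leading monomial of f
    have hgtCcA : varGt Cc.1 A.1 := Or.inl (show a.1 < c.1 by omega)
    have hgtCcE' : varGt Cc.1 E'.1 := Or.inr ⟨rfl, show b.2 < c.2 by omega⟩
    have hgtCcD' : varGt Cc.1 D'.1 := Or.inl (show b.1 < c.1 by omega)
    have hgtCcE : varGt Cc.1 E.1 := Or.inl (show b.1 < c.1 by omega)
    have hgtCcD : varGt Cc.1 D.1 := Or.inl (show a.1 < c.1 by omega)
    have hlead : IsLeadMon f m2 := by
      constructor
      · rw [MvPolynomial.mem_support_iff, hf_eq2, coeff_sub, coeff_monomial, coeff_monomial,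
          if_neg hm12, if_pos rfl]
        simp
      · intro m' hm' hne'
        rw [hf_eq2, support_pair hm12, Finset.mem_insert, Finset.mem_singleton] at hm'
        rcases hm' with rfl | rfl
        · refine ⟨Cc, by rw [hm1Cc, hm2Cc]; omega, ?_⟩
          intro v hv
          have hxv : ∀ x : σP P, varGt Cc.1 x.1 → (Finsupp.single x (1:ℕ)) v = 0 := by
            intro x hx
            rw [Finsupp.single_apply, if_neg]
            intro he
            exact varGt_asymm hv (he ▸ hx)
          have hCcv : (Finsupp.single Cc (1:ℕ)) v = 0 := by
            rw [Finsupp.single_apply, if_neg]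
            rintro rfl
            exact varGt_irrefl _ hv
          rw [hm1def, hm2def]
          simp [Finsupp.add_apply, hxv A hgtCcA, hxv E' hgtCcE', hxv D' hgtCcD',
            hxv E hgtCcE, hxv D hgtCcD, hCcv]
        · exact absurd rfl hne'
    obtain ⟨g, hgmem, mg, mf', hmg, hmf', dd, hdd⟩ := hGB f hfI hfne
    have hmf'2 : mf' = m2 := lead_unique hmf' hlead
    subst hmf'2
    obtain ⟨A', B', C', D'', hin', hC', hD'', rfl⟩ := hgmem
    have hmg2 : mg = Finsupp.single A' 1 + Finsupp.single B' 1 :=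
      lead_unique hmg (minor_lead hin' hC' hD'')
    subst hmg2
    have h1A' : 1 ≤ m2 A' := by
      refine le_trans ?_ (le_of_eq_add hdd A')
      simp [Finsupp.add_apply, Finsupp.single_eq_same]
    have h1B' : 1 ≤ m2 B' := by
      refine le_trans ?_ (le_of_eq_add hdd B')
      simp [Finsupp.add_apply, Finsupp.single_eq_same]
    rw [hm2def] at h1A' h1B'
    have hA'cases := one_le_triple h1A'
    have hB'cases := one_le_triple h1B'
    have hd1 : A'.1.1 < B'.1.1 := hin'.1
    have hd2 : A'.1.2 < B'.1.2 := hin'.2.1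
    rcases hA'cases with rfl | rfl | rfl <;> rcases hB'cases with rfl | rfl | rfl
    · exact absurd hd1 (show ¬ (b.1 < b.1) by omega)
    · exact absurd hd1 (show ¬ (b.1 < a.1) by omega)
    · exact Or.inl hin'
    · exact absurd hd2 (show ¬ (b.2 < a.2) by omega)
    · exact absurd hd1 (show ¬ (a.1 < a.1) by omega)
    · exact Or.inr hin'
    · exact absurd hd1 (show ¬ (c.1 < b.1) by omega)
    · exact absurd hd1 (show ¬ (c.1 < a.1) by omega)
    · exact absurd hd1 (show ¬ (c.1 < c.1) by omega)
  · intro H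
    have hl : LocConf P := loc_conf H
    refine ⟨⟨⟨fun g hg => Ideal.subset_span hg, ?_⟩, ?_, ?_⟩, ?_⟩
    · -- the Gröbner basis division property
      intro f hf hne
      obtain ⟨mf, hmf⟩ := exists_lead hne
      obtain ⟨m', hstep⟩ := lead_reducible hl hf hne hmf
      obtain ⟨u, A, B, C, D, hin, hC, hD, hm, _⟩ := hstep
      refine ⟨X A * X B - X C * X D, ⟨A, B, C, D, hin, hC, hD, rfl⟩,
        Finsupp.single A 1 + Finsupp.single B 1, mf, minor_lead hin hC hD, hmf, u, ?_⟩
      rw [hm]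
      abel
    · -- monic
      intro g hg
      obtain ⟨A, B, C, D, hin, hC, hD, rfl⟩ := hg
      exact ⟨Finsupp.single A 1 + Finsupp.single B 1, minor_lead hin hC hD,
        minor_coeff_AB hin hC hD⟩
    · -- reduced
      rintro g hg g' hg' hne m hm m' hm' ⟨dd, hdd⟩
      obtain ⟨A, B, C, D, hin, hC, hD, rfl⟩ := hg
      obtain ⟨A', B', C', D', hin', hC', hD', rfl⟩ := hg'
      have hm'2 : m' = Finsupp.single A' 1 + Finsupp.single B' 1 :=
        lead_unique hm' (minor_lead hin' hC' hD')
      subst hm'2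
      have h1A' : 1 ≤ m A' := by
        refine le_trans ?_ (le_of_eq_add hdd A')
        simp [Finsupp.add_apply, Finsupp.single_eq_same]
      have h1B' : 1 ≤ m B' := by
        refine le_trans ?_ (le_of_eq_add hdd B')
        simp [Finsupp.add_apply, Finsupp.single_eq_same]
      have ha1 : A.1.1 < B.1.1 := hin.1
      have ha2 : A.1.2 < B.1.2 := hin.2.1
      have hd1 : A'.1.1 < B'.1.1 := hin'.1
      have hd2 : A'.1.2 < B'.1.2 := hin'.2.1
      rw [minor_support hin hC hD, Finset.mem_insert, Finset.mem_singleton] at hm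
      rcases hm with rfl | rfl
      · -- m is the leading monomial of g
        rcases one_le_pair h1A' with rfl | rfl <;> rcases one_le_pair h1B' with rfl | rfl
        · exact absurd hd1 (lt_irrefl _)
        · -- A' = A, B' = B : the two minors coincide
          have hCC : C' = C := Subtype.ext (hC'.trans hC.symm)
          have hDD : D' = D := Subtype.ext (hD'.trans hD.symm)
          subst hCC
          subst hDD
          exact hne rfl
        · exact absurd (lt_trans hd1 ha1) (lt_irrefl _)
        · exact absurd hd1 (lt_irrefl _)
      · -- m is the trailing monomial of g
        rcases one_le_pair h1A' with rfl | rfl <;> rcases one_le_pair h1B' with rfl | rfl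
        · exact absurd hd1 (lt_irrefl _)
        · have h1 : B.1.1 < A.1.1 := by
            have t := hd1
            rw [hC, hD] at t
            exact t
          exact absurd (lt_trans h1 ha1) (lt_irrefl _)
        · have h2 : B.1.2 < A.1.2 := by
            have t := hd2
            rw [hC, hD] at t
            exact t
          exact absurd (lt_trans h2 ha2) (lt_irrefl _)
        · exact absurd hd1 (lt_irrefl _)
    · -- quadratic
      intro g hg
      obtain ⟨A, B, C, D, hin, hC, hD, rfl⟩ := hg
      exact minor_totalDegree hin hC hD

/-- The inner 2-minors of `P` form a reduced quadratic Gröbner basis of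
`I_P` with respect to `<¹_lex` if and only if for any two inner intervals `[a,b]` and
`[b,c]` of `P`, with `e = (b.1, a.2)` and `d = (a.1, b.2)` the anti-diagonal corners of
`[a,b]`, at least one of `[e,c]`, `[d,c]` is an inner interval of `P`. -/
theorem reduced_groebner_iff (K : Type*) [Field K] (P : Finset Cell) :
    (IsReducedGroebnerBasis (innerMinors K P) (innerIdeal K P) ∧
        ∀ g ∈ innerMinors K P, MvPolynomial.totalDegree g = 2) ↔
      ∀ a b c : ℕ × ℕ, InnerInterval P a b → InnerInterval P b c →
        (InnerInterval P (b.1, a.2) c ∨ InnerInterval P (a.1, b.2) c) := by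
  exact reduced_groebner_iff_aux K P
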